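/- arXiv:2504.21785 — 3 statements merged into one kernel-verified Lean document; each statement's English description precedes it below -/
import Mathlib

section
/- Let c^{(1)},…,c^{(n)} be the coefficients of the least squares approximation of G(·;Q,P,ε) in the span of G(·;Q^{(k)},P^{(k)},ε), and let c̃^{(1)},…,c̃^{(n)} be those of G(·;Q−a,P−b,ε) in the span of G(·;Q^{(k)}−a,P^{(k)}−b,ε), where a,b ∈ ℝ^d. Then c^{(k)} = c̃^{(k)} · exp((i/ε)(Q − Q^{(k)})·b) for each k, provided the Gram matrix is invertible. -/
open MeasureTheory Real

noncomputable def G (d : ℕ) (ε : ℝ) (Q P : EuclideanSpace ℝ (Fin d))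
    (x : EuclideanSpace ℝ (Fin d)) : ℂ :=
  Complex.exp (Complex.I / (ε : ℂ) * ((inner ℝ P (x - Q) : ℝ) : ℂ)
    - ((1 / (2 * ε) : ℝ) : ℂ) * ((‖x - Q‖ : ℝ) : ℂ) ^ 2)

lemma shift_integral (d : ℕ) (ε : ℝ) (a b Q1 P1 Q2 P2 : EuclideanSpace ℝ (Fin d)) :
    (∫ x, G d ε (Q1 - a) (P1 - b) x * (starRingEnd ℂ) (G d ε (Q2 - a) (P2 - b) x)) =
    (∫ x, G d ε Q1 P1 x * (starRingEnd ℂ) (G d ε Q2 P2 x)) *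
      Complex.exp (Complex.I / (ε : ℂ) * ((inner ℝ (Q1 - Q2) b : ℝ) : ℂ)) := by
  have key : ∀ x, G d ε (Q1 - a) (P1 - b) x * (starRingEnd ℂ) (G d ε (Q2 - a) (P2 - b) x) =
      (G d ε Q1 P1 (x + a) * (starRingEnd ℂ) (G d ε Q2 P2 (x + a))) *
      Complex.exp (Complex.I / (ε : ℂ) * ((inner ℝ (Q1 - Q2) b : ℝ) : ℂ)) := by
    intro x
    have h1 : x - (Q1 - a) = x + a - Q1 := by abel
    have h2 : x - (Q2 - a) = x + a - Q2 := by abel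
    rw [G, G, G, G, h1, h2, ← Complex.exp_conj, ← Complex.exp_conj,
      ← Complex.exp_add, ← Complex.exp_add, ← Complex.exp_add]
    congr 1
    have e1 : (inner ℝ (P1 - b) (x + a - Q1) : ℝ) =
        (inner ℝ P1 (x + a - Q1) : ℝ) - inner ℝ b (x + a - Q1) := inner_sub_left _ _ _
    have e2 : (inner ℝ (P2 - b) (x + a - Q2) : ℝ) =
        (inner ℝ P2 (x + a - Q2) : ℝ) - inner ℝ b (x + a - Q2) := inner_sub_left _ _ _
    have e3 : (inner ℝ (Q1 - Q2) b : ℝ) =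
        (inner ℝ b (x + a - Q2) : ℝ) - inner ℝ b (x + a - Q1) := by
      rw [real_inner_comm]
      rw [← inner_sub_right]
      congr 1
      abel
    simp only [map_sub, map_mul, map_div₀, Complex.conj_I, Complex.conj_ofReal, map_pow,
      map_one, map_ofNat]
    rw [e1, e2, e3]
    push_cast
    ring
  simp_rw [key]
  rw [integral_mul_const,
    integral_add_right_eq_self (fun y => G d ε Q1 P1 y * (starRingEnd ℂ) (G d ε Q2 P2 y)) a]

theorem lsa_coefficients_shift (d : ℕ) (hd : 1 ≤ d) (ε : ℝ) (hε : 0 < ε)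
    (n : ℕ) (hn : 1 ≤ n) (Q P a b : EuclideanSpace ℝ (Fin d))
    (Qk Pk : Fin n → EuclideanSpace ℝ (Fin d))
    (hdist : Function.Injective (fun k => (Qk k, Pk k)))
    (A At : Matrix (Fin n) (Fin n) ℂ) (f ft : Fin n → ℂ) (c ct : Fin n → ℂ)
    (hA : ∀ j k, A j k = ∫ x, G d ε (Qk j) (Pk j) x * (starRingEnd ℂ) (G d ε (Qk k) (Pk k) x))
    (hAt : ∀ j k, At j k =
      ∫ x, G d ε (Qk j - a) (Pk j - b) x * (starRingEnd ℂ) (G d ε (Qk k - a) (Pk k - b) x))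
    (hf : ∀ j, f j = ∫ x, G d ε (Qk j) (Pk j) x * (starRingEnd ℂ) (G d ε Q P x))
    (hft : ∀ j, ft j =
      ∫ x, G d ε (Qk j - a) (Pk j - b) x * (starRingEnd ℂ) (G d ε (Q - a) (P - b) x))
    (hAinv : IsUnit A) (hc : A.mulVec c = f) (hct : At.mulVec ct = ft) :
    ∀ k, c k = ct k *
      Complex.exp (Complex.I / (ε : ℂ) * ((inner ℝ (Q - Qk k) b : ℝ) : ℂ)) := by
  set ph : EuclideanSpace ℝ (Fin d) → EuclideanSpace ℝ (Fin d) → ℂ := fun u v =>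
    Complex.exp (Complex.I / (ε : ℂ) * ((inner ℝ (u - v) b : ℝ) : ℂ)) with hph
  have hAt' : ∀ j k, At j k = A j k * ph (Qk j) (Qk k) := by
    intro j k; rw [hAt, hA, shift_integral]
  have hft' : ∀ j, ft j = f j * ph (Qk j) Q := by
    intro j; rw [hft, hf, shift_integral]
  -- candidate vector
  set c' : Fin n → ℂ := fun k => ct k * ph Q (Qk k) with hc'
  have hmul : ∀ u v w : EuclideanSpace ℝ (Fin d), ph u v * ph w u = ph w v := by
    intro u v w
    rw [hph]
    simp only
    rw [← Complex.exp_add]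
    congr 1
    rw [← mul_add, ← Complex.ofReal_add, ← inner_add_left]
    congr 2
    abel
  have hAc' : A.mulVec c' = f := by
    funext j
    have h1 : At.mulVec ct j = ft j := congrFun hct j
    simp only [Matrix.mulVec, dotProduct] at h1 ⊢
    calc ∑ k, A j k * c' k
        = ∑ k, (At j k * ct k) * ph Q (Qk j) := by
          refine Finset.sum_congr rfl fun k _ => ?_
          rw [hAt' j k, hc']
          simp only
          rw [mul_assoc (A j k * ph (Qk j) (Qk k)) (ct k) (ph Q (Qk j)),
            mul_comm (ct k) (ph Q (Qk j)), mul_assoc (A j k), ← mul_assoc (ph (Qk j) (Qk k)),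
            hmul (Qk j) (Qk k) Q]
          ring
      _ = (∑ k, At j k * ct k) * ph Q (Qk j) := (Finset.sum_mul _ _ _).symm
      _ = ft j * ph Q (Qk j) := by rw [h1]
      _ = f j * (ph (Qk j) Q * ph Q (Qk j)) := by rw [hft' j]; ring
      _ = f j := by rw [hmul (Qk j) Q Q, hph]; simp
  have hinj : Function.Injective A.mulVec := by
    obtain ⟨B, hB⟩ := hAinv.exists_left_inv
    intro u v huv
    have := congrArg B.mulVec huv
    rwa [Matrix.mulVec_mulVec, Matrix.mulVec_mulVec, hB, Matrix.one_mulVec,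
      Matrix.one_mulVec] at this
  have : c = c' := hinj (by rw [hc, hAc'])
  intro k
  rw [this, hc']
end

section
/- The relative L² least-squares error is scale invariant in ε: for ε₁, ε₂ > 0, constants C_q, C_p > 0, s, t ∈ [0,1]^d and shift vectors δq^{(k)}, δp^{(k)} ∈ ℤ^d, the relative error of approximating G(·; C_q√ε₁ s, C_p√ε₁ t, ε₁) by the span of G(·; C_q√ε₁ δq^{(k)}, C_p√ε₁ δp^{(k)}, ε₁), k=1,…,n, equals the relative error of approximating G(·; C_q√ε₂ s, C_p√ε₂ t, ε₂) by the span of G(·; C_q√ε₂ δq^{(k)}, C_p√ε₂ δp^{(k)}, ε₂). -/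
open MeasureTheory Real

lemma G_smul (d : ℕ) {ε : ℝ} (hε : 0 < ε) (Q P y : EuclideanSpace ℝ (Fin d)) :
    G d ε (Real.sqrt ε • Q) (Real.sqrt ε • P) (Real.sqrt ε • y) = G d 1 Q P y := by
  have hε' : (ε : ℂ) ≠ 0 := by exact_mod_cast hε.ne'
  have h1 : Real.sqrt ε • y - Real.sqrt ε • Q = Real.sqrt ε • (y - Q) := (smul_sub _ _ _).symm
  have h2 : (inner ℝ (Real.sqrt ε • P) (Real.sqrt ε • (y - Q)) : ℝ)
      = ε * (inner ℝ P (y - Q) : ℝ) := by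
    rw [real_inner_smul_left, real_inner_smul_right, ← mul_assoc,
      Real.mul_self_sqrt hε.le]
  have h3 : ‖Real.sqrt ε • (y - Q)‖ ^ 2 = ε * ‖y - Q‖ ^ 2 := by
    rw [norm_smul, Real.norm_eq_abs, abs_of_nonneg (Real.sqrt_nonneg _), mul_pow,
      Real.sq_sqrt hε.le]
  unfold G
  rw [h1, h2]
  congr 1
  have h3' : ((‖Real.sqrt ε • (y - Q)‖ : ℝ) : ℂ) ^ 2 = (ε : ℂ) * ((‖y - Q‖ : ℝ) : ℂ) ^ 2 := by
    exact_mod_cast congrArg (Complex.ofReal) h3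
  rw [h3']
  push_cast
  field_simp

lemma integral_eq (d n : ℕ) {ε : ℝ} (hε : 0 < ε) (Q P : EuclideanSpace ℝ (Fin d))
    (Qs Ps : Fin n → EuclideanSpace ℝ (Fin d)) (c : Fin n → ℂ) :
    (∫ x, ‖G d ε (Real.sqrt ε • Q) (Real.sqrt ε • P) x
        - ∑ k, c k * G d ε (Real.sqrt ε • Qs k) (Real.sqrt ε • Ps k) x‖ ^ 2)
      = ε ^ ((d : ℝ) / 2) * ∫ y, ‖G d 1 Q P y - ∑ k, c k * G d 1 (Qs k) (Ps k) y‖ ^ 2 := by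
  have hs : (0 : ℝ) < Real.sqrt ε := Real.sqrt_pos.2 hε
  have := MeasureTheory.Measure.integral_comp_smul (μ := (volume : Measure (EuclideanSpace ℝ (Fin d))))
    (f := fun x => ‖G d ε (Real.sqrt ε • Q) (Real.sqrt ε • P) x
        - ∑ k, c k * G d ε (Real.sqrt ε • Qs k) (Real.sqrt ε • Ps k) x‖ ^ 2) (Real.sqrt ε)
  simp only [finrank_euclideanSpace, Fintype.card_fin] at this
  have hpow : |((Real.sqrt ε ^ d)⁻¹)| = (ε ^ ((d : ℝ) / 2))⁻¹ := by
    rw [abs_of_nonneg (by positivity)]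
    congr 1
    rw [← Real.rpow_natCast (Real.sqrt ε) d, Real.sqrt_eq_rpow, ← Real.rpow_mul hε.le]
    norm_num
    congr 1
    ring
  rw [hpow] at this
  have hG : ∀ y, G d ε (Real.sqrt ε • Q) (Real.sqrt ε • P) (Real.sqrt ε • y)
      - ∑ k, c k * G d ε (Real.sqrt ε • Qs k) (Real.sqrt ε • Ps k) (Real.sqrt ε • y)
      = G d 1 Q P y - ∑ k, c k * G d 1 (Qs k) (Ps k) y := by
    intro y
    simp [G_smul d hε]
  simp only [hG, smul_eq_mul] at this
  have hne : (ε ^ ((d : ℝ) / 2)) ≠ 0 := by positivity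
  field_simp at this ⊢
  linarith [this]

theorem lsa_relative_error_eps_invariant (d : ℕ) (hd : 1 ≤ d) (n : ℕ) (hn : 1 ≤ n)
    (ε₁ ε₂ : ℝ) (hε₁ : 0 < ε₁) (hε₂ : 0 < ε₂) (Cq Cp : ℝ) (hCq : 0 < Cq) (hCp : 0 < Cp)
    (s t : EuclideanSpace ℝ (Fin d))
    (hs : ∀ i, s i ∈ Set.Icc (0 : ℝ) 1) (ht : ∀ i, t i ∈ Set.Icc (0 : ℝ) 1)
    (δq δp : Fin n → EuclideanSpace ℝ (Fin d))
    (hδq : ∀ k i, ∃ z : ℤ, δq k i = (z : ℝ)) (hδp : ∀ k i, ∃ z : ℤ, δp k i = (z : ℝ)) :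
    (⨅ c : Fin n → ℂ, Real.sqrt (∫ x,
        ‖G d ε₁ ((Cq * Real.sqrt ε₁) • s) ((Cp * Real.sqrt ε₁) • t) x
          - ∑ k, c k * G d ε₁ ((Cq * Real.sqrt ε₁) • δq k) ((Cp * Real.sqrt ε₁) • δp k) x‖ ^ 2)) /
        (π * ε₁) ^ ((d : ℝ) / 4)
      = (⨅ c : Fin n → ℂ, Real.sqrt (∫ x,
          ‖G d ε₂ ((Cq * Real.sqrt ε₂) • s) ((Cp * Real.sqrt ε₂) • t) x
            - ∑ k, c k * G d ε₂ ((Cq * Real.sqrt ε₂) • δq k) ((Cp * Real.sqrt ε₂) • δp k) x‖ ^ 2)) /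
        (π * ε₂) ^ ((d : ℝ) / 4) := by
  have key : ∀ ε : ℝ, 0 < ε →
      (⨅ c : Fin n → ℂ, Real.sqrt (∫ x,
        ‖G d ε ((Cq * Real.sqrt ε) • s) ((Cp * Real.sqrt ε) • t) x
          - ∑ k, c k * G d ε ((Cq * Real.sqrt ε) • δq k) ((Cp * Real.sqrt ε) • δp k) x‖ ^ 2)) /
        (π * ε) ^ ((d : ℝ) / 4)
      = (⨅ c : Fin n → ℂ, Real.sqrt (∫ y,
          ‖G d 1 (Cq • s) (Cp • t) y - ∑ k, c k * G d 1 (Cq • δq k) (Cp • δp k) y‖ ^ 2)) /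
        π ^ ((d : ℝ) / 4) := by
    intro ε hε
    have hsm : ∀ v : EuclideanSpace ℝ (Fin d), ∀ C : ℝ,
        (C * Real.sqrt ε) • v = Real.sqrt ε • (C • v) := by
      intro v C; rw [smul_smul, mul_comm]
    have hint : ∀ c : Fin n → ℂ,
        Real.sqrt (∫ x, ‖G d ε ((Cq * Real.sqrt ε) • s) ((Cp * Real.sqrt ε) • t) x
          - ∑ k, c k * G d ε ((Cq * Real.sqrt ε) • δq k) ((Cp * Real.sqrt ε) • δp k) x‖ ^ 2)
        = ε ^ ((d : ℝ) / 4) * Real.sqrt (∫ y,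
          ‖G d 1 (Cq • s) (Cp • t) y - ∑ k, c k * G d 1 (Cq • δq k) (Cp • δp k) y‖ ^ 2) := by
      intro c
      simp only [hsm]
      rw [integral_eq d n hε (Cq • s) (Cp • t) (fun k => Cq • δq k) (fun k => Cp • δp k) c,
        Real.sqrt_mul (by positivity)]
      congr 1
      rw [Real.sqrt_eq_rpow, ← Real.rpow_mul hε.le]
      congr 1
      ring
    simp only [hint]
    rw [← Real.mul_iInf_of_nonneg (by positivity : (0:ℝ) ≤ ε ^ ((d : ℝ) / 4)),
      Real.mul_rpow Real.pi_pos.le hε.le]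
    have h1 : (0:ℝ) < π ^ ((d : ℝ) / 4) := Real.rpow_pos_of_pos Real.pi_pos _
    have h2 : (0:ℝ) < ε ^ ((d : ℝ) / 4) := Real.rpow_pos_of_pos hε _
    field_simp
  rw [key ε₁ hε₁, key ε₂ hε₂]
end

section
/- The Gram matrix entry of on-grid Gaussian neighbors is independent of ε under the mesh scaling Δq = C_q√ε, Δp = C_p√ε: ⟨G(·; Δq δq^{(j)}, Δp δp^{(j)}, ε), G(·; Δq δq^{(k)}, Δp δp^{(k)}, ε)⟩ / (πε)^{d/2} = exp( −(C_q²/4)|δq^{(j)}−δq^{(k)}|² − (C_p²/4)|δp^{(j)}−δp^{(k)}|² + (i C_q C_p/2)(δq^{(k)}−δq^{(j)})·(δp^{(j)}+δp^{(k)}) ), a quantity not depending on ε. -/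
open MeasureTheory Real

theorem gram_entry_eps_independent (d : ℕ) (hd : 1 ≤ d) (ε : ℝ) (hε : 0 < ε)
    (Cq Cp : ℝ) (hCq : 0 < Cq) (hCp : 0 < Cp) (Δq Δp : ℝ)
    (hΔq : Δq = Cq * Real.sqrt ε) (hΔp : Δp = Cp * Real.sqrt ε)
    (δqj δqk δpj δpk : EuclideanSpace ℝ (Fin d))
    (hδqj : ∀ i, ∃ z : ℤ, δqj i = (z : ℝ)) (hδqk : ∀ i, ∃ z : ℤ, δqk i = (z : ℝ))
    (hδpj : ∀ i, ∃ z : ℤ, δpj i = (z : ℝ)) (hδpk : ∀ i, ∃ z : ℤ, δpk i = (z : ℝ)) :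
    (∫ x, G d ε (Δq • δqj) (Δp • δpj) x * (starRingEnd ℂ) (G d ε (Δq • δqk) (Δp • δpk) x)) /
        (((π * ε) ^ ((d : ℝ) / 2) : ℝ) : ℂ)
      = Complex.exp (((-(Cq ^ 2 / 4) * ‖δqj - δqk‖ ^ 2
            - Cp ^ 2 / 4 * ‖δpj - δpk‖ ^ 2 : ℝ) : ℂ)
          + Complex.I * ((Cq * Cp / 2 * (inner ℝ (δqk - δqj) (δpj + δpk) : ℝ) : ℝ) : ℂ)) := by
  have hε0 : ε ≠ 0 := hε.ne'
  have hεc : (ε : ℂ) ≠ 0 := by exact_mod_cast hε0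
  set Qj := Δq • δqj with hQj
  set Qk := Δq • δqk with hQk
  set Pj := Δp • δpj with hPj
  set Pk := Δp • δpk with hPk
  set Qm := (2⁻¹ : ℝ) • (Qj + Qk) with hQm
  set a := (2⁻¹ : ℝ) • (Qj - Qk) with ha
  set w := Pj - Pk with hw
  set b : ℂ := ((ε⁻¹ : ℝ) : ℂ) with hb
  set c : ℂ := Complex.I * ((ε⁻¹ : ℝ) : ℂ) with hc
  set K : ℂ := Complex.exp (((-(ε⁻¹) * ‖a‖ ^ 2 : ℝ) : ℂ)
      + Complex.I * ((-(ε⁻¹) * (inner ℝ (Pj + Pk) a : ℝ) : ℝ) : ℂ)) with hK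
  have e1 : ∀ x : EuclideanSpace ℝ (Fin d), x - Qj = (x - Qm) - a := by
    intro x; rw [hQm, ha]; module
  have e2 : ∀ x : EuclideanSpace ℝ (Fin d), x - Qk = (x - Qm) + a := by
    intro x; rw [hQm, ha]; module
  have key : ∀ x : EuclideanSpace ℝ (Fin d),
      G d ε Qj Pj x * (starRingEnd ℂ) (G d ε Qk Pk x)
        = K * Complex.exp (-b * ((‖x - Qm‖ : ℝ) : ℂ) ^ 2
            + c * ((inner ℝ w (x - Qm) : ℝ) : ℂ)) := by
    intro x
    rw [G, G, ← Complex.exp_conj, hK, ← Complex.exp_add, ← Complex.exp_add]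
    congr 1
    have h1 : ‖x - Qj‖ ^ 2 + ‖x - Qk‖ ^ 2 = 2 * ‖x - Qm‖ ^ 2 + 2 * ‖a‖ ^ 2 := by
      rw [e1 x, e2 x, norm_sub_sq_real, norm_add_sq_real]; ring
    have h2 : (inner ℝ Pj (x - Qj) : ℝ) - (inner ℝ Pk (x - Qk) : ℝ)
        = (inner ℝ w (x - Qm) : ℝ) - (inner ℝ (Pj + Pk) a : ℝ) := by
      rw [e1 x, e2 x, hw]
      simp only [inner_sub_left, inner_sub_right, inner_add_left, inner_add_right]
      ring
    have h1c : ((‖x - Qj‖ : ℂ)) ^ 2 + ((‖x - Qk‖ : ℂ)) ^ 2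
        = 2 * ((‖x - Qm‖ : ℂ)) ^ 2 + 2 * ((‖a‖ : ℂ)) ^ 2 := by exact_mod_cast h1
    have h2c : (((inner ℝ Pj (x - Qj) : ℝ)) : ℂ) - (((inner ℝ Pk (x - Qk) : ℝ)) : ℂ)
        = (((inner ℝ w (x - Qm) : ℝ)) : ℂ) - (((inner ℝ (Pj + Pk) a : ℝ)) : ℂ) := by
      exact_mod_cast h2
    simp only [map_sub, map_mul, map_div₀, Complex.conj_I, Complex.conj_ofReal, map_pow]
    rw [hb, hc]
    simp only [Complex.ofReal_mul, Complex.ofReal_neg, Complex.ofReal_inv, Complex.ofReal_pow,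
      Complex.ofReal_div, Complex.ofReal_one, Complex.ofReal_ofNat]
    linear_combination (Complex.I * (ε : ℂ)⁻¹) * h2c + (-(1 / (2 * (ε : ℂ)))) * h1c
  have hbre : 0 < b.re := by
    rw [hb]; simpa using inv_pos.mpr hε
  have hint := GaussianFourier.integral_cexp_neg_mul_sq_norm_add (V := EuclideanSpace ℝ (Fin d)) hbre c w
  have hX : (((π * ε) ^ ((d : ℝ) / 2) : ℝ) : ℂ) ≠ 0 := by
    exact_mod_cast (Real.rpow_pos_of_pos (by positivity) _).ne'
  have hpow : ((π : ℂ) / b) ^ ((Module.finrank ℝ (EuclideanSpace ℝ (Fin d)) : ℂ) / 2)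
      = (((π * ε) ^ ((d : ℝ) / 2) : ℝ) : ℂ) := by
    have hbase : (π : ℂ) / b = ((π * ε : ℝ) : ℂ) := by
      rw [hb]; push_cast; field_simp
    rw [hbase, finrank_euclideanSpace_fin,
      Complex.ofReal_cpow (by positivity : (0 : ℝ) ≤ π * ε)]
    congr 1
    push_cast
    ring
  have hI : (∫ x, G d ε Qj Pj x * (starRingEnd ℂ) (G d ε Qk Pk x))
      = (((π * ε) ^ ((d : ℝ) / 2) : ℝ) : ℂ)
        * (K * Complex.exp (c ^ 2 * ((‖w‖ : ℂ)) ^ 2 / (4 * b))) := by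
    calc (∫ x, G d ε Qj Pj x * (starRingEnd ℂ) (G d ε Qk Pk x))
        = ∫ x, K * Complex.exp (-b * ((‖x - Qm‖ : ℝ) : ℂ) ^ 2
            + c * ((inner ℝ w (x - Qm) : ℝ) : ℂ)) := by
          exact integral_congr_ae (Filter.Eventually.of_forall key)
      _ = K * ∫ x, Complex.exp (-b * ((‖x - Qm‖ : ℝ) : ℂ) ^ 2
            + c * ((inner ℝ w (x - Qm) : ℝ) : ℂ)) := integral_const_mul K _
      _ = K * ∫ x, Complex.exp (-b * ((‖x‖ : ℝ) : ℂ) ^ 2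
            + c * ((inner ℝ w x : ℝ) : ℂ)) := by
          rw [integral_sub_right_eq_self (fun v : EuclideanSpace ℝ (Fin d) =>
            Complex.exp (-b * ((‖v‖ : ℝ) : ℂ) ^ 2 + c * ((inner ℝ w v : ℝ) : ℂ))) Qm]
      _ = K * (((π : ℂ) / b) ^ ((Module.finrank ℝ (EuclideanSpace ℝ (Fin d)) : ℂ) / 2)
            * Complex.exp (c ^ 2 * ((‖w‖ : ℂ)) ^ 2 / (4 * b))) := by rw [hint]
      _ = (((π * ε) ^ ((d : ℝ) / 2) : ℝ) : ℂ)
            * (K * Complex.exp (c ^ 2 * ((‖w‖ : ℂ)) ^ 2 / (4 * b))) := by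
          rw [hpow]; ring
  rw [hI, mul_comm, mul_div_assoc, div_self hX, mul_one, hK,
    ← Complex.exp_add]
  congr 1
  -- real facts
  have hsq : Real.sqrt ε * Real.sqrt ε = ε := Real.mul_self_sqrt hε.le
  have hna : ‖a‖ ^ 2 = Cq ^ 2 * ε / 4 * ‖δqj - δqk‖ ^ 2 := by
    have : a = (Δq / 2) • (δqj - δqk) := by
      rw [ha, hQj, hQk]; module
    rw [this, norm_smul, mul_pow, Real.norm_eq_abs, sq_abs, hΔq]
    rw [div_pow, mul_pow]
    rw [Real.sq_sqrt hε.le]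
    ring
  have hipa : (inner ℝ (Pj + Pk) a : ℝ)
      = Cq * Cp * ε / 2 * (inner ℝ (δpj + δpk) (δqj - δqk) : ℝ) := by
    have h1 : Pj + Pk = Δp • (δpj + δpk) := by rw [hPj, hPk]; module
    have h2 : a = (Δq / 2) • (δqj - δqk) := by rw [ha, hQj, hQk]; module
    rw [h1, h2, real_inner_smul_left, real_inner_smul_right, hΔq, hΔp]
    linear_combination (Cp * Cq / 2 * (inner ℝ (δpj + δpk) (δqj - δqk) : ℝ)) * hsq
  have hnw : ‖w‖ ^ 2 = Cp ^ 2 * ε * ‖δpj - δpk‖ ^ 2 := by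
    have : w = Δp • (δpj - δpk) := by rw [hw, hPj, hPk]; module
    rw [this, norm_smul, mul_pow, Real.norm_eq_abs, sq_abs, hΔp, mul_pow,
      Real.sq_sqrt hε.le]
  have hsym : (inner ℝ (δqk - δqj) (δpj + δpk) : ℝ)
      = -(inner ℝ (δpj + δpk) (δqj - δqk) : ℝ) := by
    rw [real_inner_comm]
    simp [inner_sub_right]
  have hnwc : ((‖w‖ : ℝ) : ℂ) ^ 2 = (Cp : ℂ) ^ 2 * (ε : ℂ) * ((‖δpj - δpk‖ : ℝ) : ℂ) ^ 2 := by
    exact_mod_cast hnw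
  rw [hna, hipa, hnwc, hsym, hc, hb]
  simp only [Complex.ofReal_mul, Complex.ofReal_neg, Complex.ofReal_inv, Complex.ofReal_pow,
    Complex.ofReal_div, Complex.ofReal_sub, Complex.ofReal_add, Complex.ofReal_one,
    Complex.ofReal_ofNat]
  field_simp
  linear_combination (2 * (Cp : ℂ) ^ 2 * ((‖δpj - δpk‖ : ℝ) : ℂ) ^ 2) * Complex.I_sq
end
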